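/- Let G be a graph containing a vertex u of degree 1 whose unique neighbor is v. If M is a matching of G in which v is matched to some vertex w ≠ u, then M' = (M \ {vw}) ∪ {uv} is a matching of G with |M'| = |M|, and the number of connected components of G[V_{M'}] is at least the number of connected components of G[V_M]. -/

import Mathlib

/-- `M` is a matching of `G`. -/
def IsMatching' {V : Type*} (G : SimpleGraph V) (M : Set (Sym2 V)) : Prop :=
  M ⊆ G.edgeSet ∧ ∀ e ∈ M, ∀ f ∈ M, e ≠ f → ∀ v, v ∈ e → v ∉ f

/-- The set of vertices saturated by `M`. -/
def Vm {V : Type*} (M : Set (Sym2 V)) : Set V := {v | ∃ e ∈ M, v ∈ e}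

/-- If `u` is a pendant vertex with unique neighbor `v`, and a matching `M`
matches `v` to some `w ≠ u`, then replacing the edge `vw` by `uv` yields a
matching of the same size whose saturated vertices induce at least as many
connected components. -/
theorem stmt13 {V : Type*} [Fintype V] (G : SimpleGraph V) (u v w : V)
    (huv : G.Adj u v) (hdeg : ∀ x, G.Adj u x → x = v)
    (M : Set (Sym2 V)) (hM : IsMatching' G M) (hwu : w ≠ u) (hvw : s(v, w) ∈ M) :
    IsMatching' G ((M \ {s(v, w)}) ∪ {s(u, v)}) ∧
    ((M \ {s(v, w)}) ∪ {s(u, v)}).ncard = M.ncard ∧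
    Nat.card (G.induce (Vm M)).ConnectedComponent ≤
      Nat.card (G.induce (Vm ((M \ {s(v, w)}) ∪ {s(u, v)}))).ConnectedComponent := by
  classical
  have hGvw : G.Adj v w := hM.1 hvw
  have huvne : u ≠ v := huv.ne
  have hvwne : v ≠ w := hGvw.ne
  have hne : s(u, v) ≠ s(v, w) := by
    intro h
    rw [Sym2.eq_iff] at h
    rcases h with ⟨h1, -⟩ | ⟨h1, -⟩
    · exact huvne h1
    · exact hwu h1.symm
  -- u is not saturated by M
  have hu_not : u ∉ Vm M := by
    rintro ⟨e, he, hue⟩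
    induction e using Sym2.inductionOn with
    | hf a b =>
      have hab : G.Adj a b := hM.1 he
      rw [Sym2.mem_iff] at hue
      have heuv : s(a, b) = s(u, v) := by
        rcases hue with rfl | rfl
        · rw [hdeg b hab]
        · rw [hdeg a hab.symm, Sym2.eq_swap]
      have hne' : s(a, b) ≠ s(v, w) := heuv ▸ hne
      have := hM.2 _ he _ hvw hne' v (by rw [heuv]; exact Sym2.mem_mk_right u v)
      exact this (Sym2.mem_mk_left v w)
  have hv_in_e : ∀ e ∈ M, e ≠ s(v, w) → v ∉ e := fun e he h hv =>
    hM.2 _ hvw _ he (Ne.symm h) v (Sym2.mem_mk_left v w) hv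
  have hu_in_e : ∀ e ∈ M, u ∉ e := fun e he h => hu_not ⟨e, he, h⟩
  have huv_not : s(u, v) ∉ M := fun h => hu_in_e _ h (Sym2.mem_mk_left u v)
  -- Part 1: matching
  have hmatch : IsMatching' G ((M \ {s(v, w)}) ∪ {s(u, v)}) := by
    constructor
    · rintro e (⟨he, -⟩ | he)
      · exact hM.1 he
      · rw [Set.mem_singleton_iff] at he; subst he; exact huv
    · rintro e he f hf hef x hx
      rcases he with ⟨he, hevw⟩ | he
      all_goals rcases hf with ⟨hf, hfvw⟩ | hf
      · exact hM.2 _ he _ hf hef x hx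
      · rw [Set.mem_singleton_iff] at hf; subst hf
        rw [Sym2.mem_iff]
        rintro (rfl | rfl)
        · exact hu_in_e _ he hx
        · exact hv_in_e _ he (by simpa using hevw) hx
      · rw [Set.mem_singleton_iff] at he; subst he
        rw [Sym2.mem_iff] at hx
        rcases hx with rfl | rfl
        · exact hu_in_e _ hf
        · exact hv_in_e _ hf (by simpa using hfvw)
      · rw [Set.mem_singleton_iff] at he hf
        exact absurd (he.trans hf.symm) hef
  refine ⟨hmatch, ?_, ?_⟩
  -- Part 2: cardinality
  · rw [Set.union_singleton, Set.ncard_insert_of_notMem (fun (h : s(u, v) ∈ M \ {s(v, w)}) => huv_not h.1)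
      ((Set.toFinite M).diff), Set.ncard_diff_singleton_add_one hvw (Set.toFinite M)]
  -- Part 3: components
  · set M' := (M \ {s(v, w)}) ∪ {s(u, v)} with hM'
    have hvw_mem : w ∈ Vm M := ⟨_, hvw, Sym2.mem_mk_right v w⟩
    have hu_mem : u ∈ Vm M' := ⟨s(u, v), Or.inr rfl, Sym2.mem_mk_left u v⟩
    have hstep : ∀ x ∈ Vm M', x ≠ u → x ∈ Vm M := by
      rintro x ⟨e, he, hxe⟩ hxu
      rcases he with ⟨he, -⟩ | he
      · exact ⟨e, he, hxe⟩
      · rw [Set.mem_singleton_iff] at he; subst he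
        rw [Sym2.mem_iff] at hxe
        rcases hxe with h | h
        · exact absurd h hxu
        · exact ⟨_, hvw, by rw [h]; exact Sym2.mem_mk_left v w⟩
    have hback : ∀ x ∈ Vm M, x ≠ w → x ∈ Vm M' := by
      rintro x ⟨e, he, hxe⟩ hxw
      by_cases hevw : e = s(v, w)
      · subst hevw
        rw [Sym2.mem_iff] at hxe
        rcases hxe with h | h
        · exact ⟨s(u, v), Or.inr rfl, by rw [h]; exact Sym2.mem_mk_right u v⟩
        · exact absurd h hxw
      · exact ⟨e, Or.inl ⟨he, hevw⟩, hxe⟩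
    -- the hom from induce (Vm M') to induce (Vm M), sending u to w
    let f : G.induce (Vm M') →g G.induce (Vm M) :=
      { toFun := fun x => if h : (x : V) = u then ⟨w, hvw_mem⟩ else ⟨x, hstep x x.2 h⟩
        map_rel' := by
          rintro ⟨a, ha⟩ ⟨b, hb⟩ hab
          have hab' : G.Adj a b := hab
          by_cases hau : a = u
          · subst hau
            have hbv : b = v := hdeg _ hab'
            subst hbv
            simp only [dif_pos rfl, dif_neg huvne.symm]
            exact hGvw.symm
          · by_cases hbu : b = u
            · subst hbu
              have hav : a = v := hdeg _ hab'.symm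
              subst hav
              simp only [dif_pos rfl, dif_neg huvne.symm]
              exact hGvw
            · simp only [dif_neg hau, dif_neg hbu]
              exact hab' }
    have hsurj : Function.Surjective (SimpleGraph.ConnectedComponent.map f) := by
      intro c
      induction c using SimpleGraph.ConnectedComponent.ind with
      | _ y =>
        by_cases hyw : (y : V) = w
        · refine ⟨(G.induce (Vm M')).connectedComponentMk ⟨u, hu_mem⟩, ?_⟩
          rw [SimpleGraph.ConnectedComponent.map_mk]
          congr 1
          show (if h : u = u then (⟨w, hvw_mem⟩ : Vm M) else ⟨u, hstep u hu_mem h⟩) = y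
          rw [dif_pos rfl]
          exact Subtype.ext hyw.symm
        · have hyu : (y : V) ≠ u := by
            rintro h
            exact hu_not (h ▸ y.2)
          refine ⟨(G.induce (Vm M')).connectedComponentMk ⟨y, hback y y.2 hyw⟩, ?_⟩
          rw [SimpleGraph.ConnectedComponent.map_mk]
          congr 1
          show (if h : (y : V) = u then (⟨w, hvw_mem⟩ : Vm M) else ⟨y, _⟩) = y
          rw [dif_neg hyu]
    exact Nat.card_le_card_of_surjective _ hsurj
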